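/- Let E be a separable Banach space and (Ω, 𝓕, ℙ) a probability space. Suppose that for all N, M ∈ ℕ one has a decomposition 𝓐_N = 𝓡_N^M + 𝓑_N^M + 𝓒_N^M + 𝓓_N^M of E-valued random variables on Ω. Assume that for each fixed M: (R1) r^M := limsup_{N→∞} E[‖𝓡_N^M‖²] is finite; (B1) 𝓑_N^M converges in law, as N → ∞, to an E-valued random variable 𝓑^M; (C1) E[‖𝓒_N^M‖²] → 0 as N → ∞; (D1) 𝓓_N^M converges in probability, as N → ∞, to a deterministic element 𝓓^M ∈ E. Assume further, as M → ∞: (R2) r^M → 0; (B2) 𝓑^M converges in law to an E-valued random variable 𝓑; (D2) 𝓓^M → 𝓓 in E. Then 𝓐_N converges in law, as N → ∞, to 𝓑 + 𝓓 (i.e. the pushforward of the law of 𝓑 under the translation x ↦ x + 𝓓). -/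

import Mathlib

open Filter MeasureTheory
open scoped ENNReal NNReal

section StepLemmas
open Metric


private lemma integ_aux {α : Type*} [MeasurableSpace α] (m : Measure α) [IsFiniteMeasure m]
    {E : Type*} [TopologicalSpace E] [MeasurableSpace E]
    {f : E → ℝ} (hf : Continuous f) {K : ℝ} (hK : ∀ x, |f x| ≤ K) {g : α → E}
    (hg : AEStronglyMeasurable g m) : Integrable (fun ω => f (g ω)) m :=
  ⟨hf.comp_aestronglyMeasurable hg,
    HasFiniteIntegral.of_bounded (C := K) (ae_of_all _ fun ω => by
      rw [Real.norm_eq_abs]; exact hK _)⟩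

private lemma shift_bcf {E : Type*} [NormedAddCommGroup E] (f : E → ℝ) (K : ℝ)
    (hK : ∀ x, |f x| ≤ K) (hf : Continuous f) (v : E) :
    ∃ g : BoundedContinuousFunction E ℝ, ∀ x, g x = f (x + v) := by
  refine ⟨BoundedContinuousFunction.mkOfBound ⟨fun x => f (x + v), by continuity⟩ (2*K)
    (fun x y => ?_), fun x => rfl⟩
  rw [Real.dist_eq]
  have := hK (x + v); have := hK (y + v)
  calc |f (x+v) - f (y+v)| ≤ |f (x+v)| + |f (y+v)| := abs_sub _ _
    _ ≤ 2*K := by linarith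

theorem step1
    {E : Type*} [NormedAddCommGroup E] [NormedSpace ℝ E] [CompleteSpace E]
    [TopologicalSpace.SeparableSpace E] [MeasurableSpace E] [BorelSpace E]
    {Ω : Type*} [MeasurableSpace Ω] (μ : Measure Ω) [IsProbabilityMeasure μ]
    {Ω' : ℕ → Type*} [∀ M, MeasurableSpace (Ω' M)]
    (ν : ∀ M, Measure (Ω' M)) [∀ M, IsProbabilityMeasure (ν M)]
    {Ω₀ : Type*} [MeasurableSpace Ω₀] (ν₀ : Measure Ω₀) [IsProbabilityMeasure ν₀]
    (A : ℕ → Ω → E) (R B C D : ℕ → ℕ → Ω → E)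
    (BM : ∀ M : ℕ, Ω' M → E) (Blim : Ω₀ → E) (DM : ℕ → E) (Dlim : E)
    (hAmeas : ∀ N, AEStronglyMeasurable (A N) μ)
    (hRmeas : ∀ N M, AEStronglyMeasurable (R N M) μ)
    (hBmeas : ∀ N M, AEStronglyMeasurable (B N M) μ)
    (hCmeas : ∀ N M, AEStronglyMeasurable (C N M) μ)
    (hDmeas : ∀ N M, AEStronglyMeasurable (D N M) μ)
    (hBMmeas : ∀ M, AEStronglyMeasurable (BM M) (ν M))
    (hBlimmeas : AEStronglyMeasurable Blim ν₀)
    (hdecomp : ∀ N M ω, A N ω = R N M ω + B N M ω + C N M ω + D N M ω)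
    (r : ℕ → ℝ≥0∞)
    (hr : ∀ M, r M = Filter.limsup (fun N => ∫⁻ ω, (‖R N M ω‖₊ : ℝ≥0∞) ^ 2 ∂μ) atTop)
    (hR1 : ∀ M, r M ≠ ⊤)
    (hB1 : ∀ M : ℕ, ∀ f : BoundedContinuousFunction E ℝ,
      Tendsto (fun N => ∫ ω, f (B N M ω) ∂μ) atTop (nhds (∫ ω, f (BM M ω) ∂(ν M))))
    (hC1 : ∀ M : ℕ, Tendsto (fun N => ∫⁻ ω, (‖C N M ω‖₊ : ℝ≥0∞) ^ 2 ∂μ) atTop (nhds 0))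
    (hD1 : ∀ M : ℕ, TendstoInMeasure μ (fun N => D N M) atTop (fun _ => DM M))
    (hR2 : Tendsto r atTop (nhds 0))
    (hB2 : ∀ f : BoundedContinuousFunction E ℝ,
      Tendsto (fun M => ∫ ω, f (BM M ω) ∂(ν M)) atTop (nhds (∫ ω, f (Blim ω) ∂ν₀)))
    (hD2 : Tendsto DM atTop (nhds Dlim))
    (f : E → ℝ) (L : ℝ≥0) (K : ℝ) (hLip : LipschitzWith L f) (hK : ∀ x, |f x| ≤ K) :
    Tendsto (fun N => ∫ ω, f (A N ω) ∂μ) atTop (nhds (∫ ω, f (Blim ω + Dlim) ∂ν₀)) := by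
  have hcont : Continuous f := hLip.continuous
  have hK0 : 0 ≤ K := le_trans (abs_nonneg _) (hK 0)
  have hL0 : (0:ℝ) ≤ (L:ℝ) := L.coe_nonneg
  rw [Metric.tendsto_nhds]
  intro ε εpos
  set δ : ℝ := ε / (8 * ((L:ℝ) + 1)) with hδdef
  have δpos : 0 < δ := by positivity
  have hLδ : (L:ℝ) * δ ≤ ε/8 := by
    have h2 : ((L:ℝ)+1) * δ = ε/8 := by
      rw [hδdef]; field_simp
    nlinarith [mul_le_mul_of_nonneg_right (by linarith : (L:ℝ) ≤ (L:ℝ)+1) δpos.le]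
  set δ' : ℝ := δ/3 with hδ'def
  have δ'pos : 0 < δ' := by positivity
  have h2K : (0:ℝ) < 2*K+1 := by linarith
  set c₁ : ℝ := (2*K+1) * (3/δ'^2 + 1) with hc₁def
  have hc₁ : 0 < c₁ := mul_pos h2K (by positivity)
  set θ₀ : ℝ := ε / (8 * c₁) with hθ₀def
  have θ₀pos : 0 < θ₀ := by positivity
  have hnum : 2*K*(3*θ₀/δ'^2 + θ₀) ≤ ε/8 := by
    have e1 : θ₀ * c₁ = ε/8 := by
      rw [hθ₀def]; field_simp
    have e2 : 2*K*(3*θ₀/δ'^2 + θ₀) = 2*K * (θ₀ * (3/δ'^2+1)) := by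
      have hδ'ne : δ'^2 ≠ 0 := by positivity
      field_simp
    rw [e2, ← e1, hc₁def]
    have h3 : (0:ℝ) ≤ θ₀ * (3/δ'^2+1) := by positivity
    nlinarith
  set θ : ℝ≥0∞ := ENNReal.ofReal θ₀ with hθdef
  have θpos : 0 < θ := ENNReal.ofReal_pos.mpr θ₀pos
  have θtop : θ ≠ ⊤ := ENNReal.ofReal_ne_top
  -- choose M
  obtain ⟨gD, hgD⟩ := shift_bcf f K hK hcont Dlim
  have hB2' : Tendsto (fun M => ∫ ω, f (BM M ω + Dlim) ∂(ν M)) atTop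
      (nhds (∫ ω, f (Blim ω + Dlim) ∂ν₀)) := by
    have := hB2 gD
    simpa only [hgD] using this
  have hM1 : ∀ᶠ M in atTop, r M < θ := hR2.eventually_lt_const θpos
  have hM2 : ∀ᶠ M in atTop, ‖DM M - Dlim‖ < δ := by
    have : Tendsto (fun M => ‖DM M - Dlim‖) atTop (nhds 0) :=
      tendsto_iff_norm_sub_tendsto_zero.mp hD2
    exact this.eventually_lt_const δpos
  have hM3 : ∀ᶠ M in atTop,
      dist (∫ ω, f (BM M ω + Dlim) ∂(ν M)) (∫ ω, f (Blim ω + Dlim) ∂ν₀) < ε/8 := by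
    have := Metric.tendsto_nhds.mp hB2' (ε/8) (by positivity)
    exact this
  obtain ⟨M, hM1, hM2, hM3⟩ := (hM1.and (hM2.and hM3)).exists
  -- eventual facts in N
  have ha : ∀ᶠ N in atTop, (∫⁻ ω, (‖R N M ω‖₊ : ℝ≥0∞) ^ 2 ∂μ) < θ + θ := by
    apply eventually_lt_of_limsup_lt
    · rw [← hr M]
      exact lt_of_lt_of_le hM1 le_self_add
    · exact ⟨⊤, eventually_map.mpr (Eventually.of_forall fun _ => le_top)⟩
  have hb : ∀ᶠ N in atTop, (∫⁻ ω, (‖C N M ω‖₊ : ℝ≥0∞) ^ 2 ∂μ) < θ :=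
    (hC1 M).eventually_lt_const θpos
  have hc : ∀ᶠ N in atTop, μ {x | δ' ≤ dist (D N M x) (DM M)} < θ :=
    (tendstoInMeasure_iff_dist.mp (hD1 M) δ' δ'pos).eventually_lt_const θpos
  obtain ⟨gM, hgM⟩ := shift_bcf f K hK hcont (DM M)
  have hd : ∀ᶠ N in atTop,
      dist (∫ ω, f (B N M ω + DM M) ∂μ) (∫ ω, f (BM M ω + DM M) ∂(ν M)) < ε/8 := by
    have := Metric.tendsto_nhds.mp (hB1 M gM) (ε/8) (by positivity)
    simpa only [hgM] using this
  filter_upwards [ha, hb, hc, hd] with N hRN hCN hDN hBN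
  -- the error term
  set err : Ω → E := fun ω => R N M ω + C N M ω + (D N M ω - DM M) with herrdef
  have herrm : AEStronglyMeasurable err μ :=
    ((hRmeas N M).add (hCmeas N M)).add ((hDmeas N M).sub aestronglyMeasurable_const)
  set S : Set Ω := {ω | δ < ‖err ω‖} with hSdef
  have hS : NullMeasurableSet S μ :=
    herrm.norm.aemeasurable.nullMeasurable measurableSet_Ioi
  set dd : ℝ≥0∞ := ENNReal.ofReal (δ'^2) with hdddef
  have hdd0 : dd ≠ 0 := (ENNReal.ofReal_pos.mpr (by positivity)).ne'
  have hddtop : dd ≠ ⊤ := ENNReal.ofReal_ne_top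
  -- Chebyshev
  have hμS : μ S ≤ (θ + θ + θ) / dd + θ := by
    set SR : Set Ω := {ω | dd ≤ (‖R N M ω‖₊ : ℝ≥0∞) ^ 2} with hSRdef
    set SC : Set Ω := {ω | dd ≤ (‖C N M ω‖₊ : ℝ≥0∞) ^ 2} with hSCdef
    set SD : Set Ω := {x | δ' ≤ dist (D N M x) (DM M)} with hSDdef
    have hnorm2 : ∀ (x : E), ((‖x‖₊ : ℝ≥0∞) ^ 2) = ENNReal.ofReal (‖x‖^2) := by
      intro x
      rw [← enorm_eq_nnnorm, ← ofReal_norm, ← ENNReal.ofReal_pow (norm_nonneg x)]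
    have hlt : ∀ (x : E), ¬ (dd ≤ (‖x‖₊ : ℝ≥0∞) ^ 2) → ‖x‖ < δ' := by
      intro x hx
      rw [not_le, hnorm2, hdddef] at hx
      have := (ENNReal.ofReal_lt_ofReal_iff (by positivity)).mp hx
      exact lt_of_pow_lt_pow_left₀ 2 δ'pos.le this
    have hsub : S ⊆ SR ∪ SC ∪ SD := by
      intro ω hω
      by_contra hn
      simp only [Set.mem_union, not_or] at hn
      obtain ⟨⟨h1, h2⟩, h3⟩ := hn
      have e1 : ‖R N M ω‖ < δ' := hlt _ h1
      have e2 : ‖C N M ω‖ < δ' := hlt _ h2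
      have e3 : ‖D N M ω - DM M‖ < δ' := by
        rw [← dist_eq_norm]
        exact lt_of_not_ge h3
      have : ‖err ω‖ ≤ ‖R N M ω‖ + ‖C N M ω‖ + ‖D N M ω - DM M‖ :=
        (norm_add_le _ _).trans (by gcongr; exact norm_add_le _ _)
      have hδω : δ < ‖err ω‖ := hω
      rw [hδ'def] at e1 e2 e3
      linarith
    have cheb : ∀ (g : Ω → E), AEStronglyMeasurable g μ →
        μ {ω | dd ≤ (‖g ω‖₊ : ℝ≥0∞) ^ 2} ≤ (∫⁻ ω, (‖g ω‖₊ : ℝ≥0∞) ^ 2 ∂μ) / dd := by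
      intro g hg
      have hmeas : AEMeasurable (fun ω => (‖g ω‖₊ : ℝ≥0∞) ^ 2) μ :=
        hg.enorm.pow_const 2
      have := mul_meas_ge_le_lintegral₀ hmeas dd
      rw [ENNReal.le_div_iff_mul_le (Or.inl hdd0) (Or.inl hddtop), mul_comm]
      exact this
    calc μ S ≤ μ (SR ∪ SC ∪ SD) := measure_mono hsub
      _ ≤ μ SR + μ SC + μ SD := le_trans (measure_union_le _ _)
          (by gcongr; exact measure_union_le _ _)
      _ ≤ (∫⁻ ω, (‖R N M ω‖₊ : ℝ≥0∞) ^ 2 ∂μ) / dd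
          + (∫⁻ ω, (‖C N M ω‖₊ : ℝ≥0∞) ^ 2 ∂μ) / dd + μ SD := by
          gcongr
          · exact cheb _ (hRmeas N M)
          · exact cheb _ (hCmeas N M)
      _ ≤ (θ + θ) / dd + θ / dd + θ := by
          gcongr <;> first
          | exact hRN.le
          | exact hCN.le
          | exact hDN.le
      _ = (θ + θ + θ) / dd + θ := by rw [ENNReal.div_add_div_same]
  have hμStop : (θ + θ + θ) / dd + θ ≠ ⊤ := by
    refine ENNReal.add_ne_top.mpr ⟨(ENNReal.div_lt_top ?_ hdd0).ne, θtop⟩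
    finiteness
  have hμSR : (μ S).toReal ≤ 3*θ₀/δ'^2 + θ₀ := by
    have h1 : (μ S).toReal ≤ ((θ + θ + θ) / dd + θ).toReal :=
      ENNReal.toReal_mono hμStop hμS
    refine h1.trans_eq ?_
    rw [ENNReal.toReal_add (ENNReal.div_lt_top (by finiteness) hdd0).ne θtop,
      ENNReal.toReal_div, hθdef, hdddef]
    rw [← ENNReal.ofReal_add θ₀pos.le θ₀pos.le, ← ENNReal.ofReal_add (by linarith) θ₀pos.le]
    rw [ENNReal.toReal_ofReal (by linarith), ENNReal.toReal_ofReal (by positivity),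
      ENNReal.toReal_ofReal θ₀pos.le]
    ring
  -- integrability
  have intA : Integrable (fun ω => f (A N ω)) μ := integ_aux μ hcont hK (hAmeas N)
  have intB1 : Integrable (fun ω => f (B N M ω + DM M)) μ :=
    integ_aux μ hcont hK ((hBmeas N M).add aestronglyMeasurable_const)
  have intBM1 : Integrable (fun ω => f (BM M ω + DM M)) (ν M) :=
    integ_aux (ν M) hcont hK ((hBMmeas M).add aestronglyMeasurable_const)
  have intBM2 : Integrable (fun ω => f (BM M ω + Dlim)) (ν M) :=
    integ_aux (ν M) hcont hK ((hBMmeas M).add aestronglyMeasurable_const)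
  -- T1 estimate
  have hT1 : dist (∫ ω, f (A N ω) ∂μ) (∫ ω, f (B N M ω + DM M) ∂μ)
      ≤ (L:ℝ)*δ + 2*K*(μ S).toReal := by
    have hsubi : Integrable (fun ω => f (A N ω) - f (B N M ω + DM M)) μ := intA.sub intB1
    rw [dist_eq_norm, ← integral_sub intA intB1]
    have hfin1 : ENNReal.ofReal (2*K) * μ S ≠ ⊤ := by finiteness
    calc ‖∫ ω, (f (A N ω) - f (B N M ω + DM M)) ∂μ‖
        ≤ ∫ ω, ‖f (A N ω) - f (B N M ω + DM M)‖ ∂μ := norm_integral_le_integral_norm _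
      _ = (∫⁻ ω, (‖f (A N ω) - f (B N M ω + DM M)‖₊ : ℝ≥0∞) ∂μ).toReal :=
          integral_norm_eq_lintegral_enorm hsubi.aestronglyMeasurable
      _ ≤ (ENNReal.ofReal (2*K) * μ S + ENNReal.ofReal ((L:ℝ)*δ)).toReal := by
          apply ENNReal.toReal_mono (by finiteness)
          calc ∫⁻ ω, (‖f (A N ω) - f (B N M ω + DM M)‖₊ : ℝ≥0∞) ∂μ
              ≤ ∫⁻ ω, (S.indicator (fun _ => ENNReal.ofReal (2*K)) ω
                  + ENNReal.ofReal ((L:ℝ)*δ)) ∂μ := by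
                apply lintegral_mono
                intro ω
                dsimp only
                by_cases hω : ω ∈ S
                · rw [Set.indicator_of_mem hω]
                  refine le_trans ?_ le_self_add
                  rw [← enorm_eq_nnnorm, ← ofReal_norm]
                  apply ENNReal.ofReal_le_ofReal
                  rw [Real.norm_eq_abs]
                  have h1 := hK (A N ω); have h2 := hK (B N M ω + DM M)
                  calc |f (A N ω) - f (B N M ω + DM M)|
                      ≤ |f (A N ω)| + |f (B N M ω + DM M)| := abs_sub _ _
                    _ ≤ 2*K := by linarith
                · rw [Set.indicator_of_notMem hω, zero_add]
                  have hωS : ‖err ω‖ ≤ δ := not_lt.mp hω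
                  have hAeq : A N ω - (B N M ω + DM M) = err ω := by
                    simp only [herrdef, hdecomp N M ω]
                    abel
                  rw [← enorm_eq_nnnorm, ← ofReal_norm]
                  apply ENNReal.ofReal_le_ofReal
                  rw [← dist_eq_norm]
                  calc dist (f (A N ω)) (f (B N M ω + DM M))
                      ≤ (L:ℝ) * dist (A N ω) (B N M ω + DM M) := hLip.dist_le_mul _ _
                    _ = (L:ℝ) * ‖err ω‖ := by rw [dist_eq_norm, hAeq]
                    _ ≤ (L:ℝ) * δ := mul_le_mul_of_nonneg_left hωS hL0
            _ = ENNReal.ofReal (2*K) * μ S + ENNReal.ofReal ((L:ℝ)*δ) := by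
                rw [lintegral_add_right _ measurable_const, lintegral_indicator₀ hS,
                  setLIntegral_const, lintegral_const, measure_univ, mul_one]
      _ = (L:ℝ)*δ + 2*K*(μ S).toReal := by
          rw [ENNReal.toReal_add hfin1 ENNReal.ofReal_ne_top, ENNReal.toReal_mul,
            ENNReal.toReal_ofReal (by linarith : (0:ℝ) ≤ 2*K),
            ENNReal.toReal_ofReal (mul_nonneg hL0 δpos.le)]
          ring
  have hT1' : dist (∫ ω, f (A N ω) ∂μ) (∫ ω, f (B N M ω + DM M) ∂μ) ≤ ε/8 + ε/8 := by
    have h1 : 2*K*(μ S).toReal ≤ 2*K*(3*θ₀/δ'^2 + θ₀) :=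
      mul_le_mul_of_nonneg_left hμSR (by linarith)
    linarith
  -- T3 estimate
  have hT3 : dist (∫ ω, f (BM M ω + DM M) ∂(ν M)) (∫ ω, f (BM M ω + Dlim) ∂(ν M))
      ≤ (L:ℝ)*δ := by
    rw [dist_eq_norm, ← integral_sub intBM1 intBM2]
    have hb := norm_integral_le_of_norm_le_const (μ := ν M) (C := (L:ℝ)*δ)
      (f := fun ω => f (BM M ω + DM M) - f (BM M ω + Dlim))
      (ae_of_all _ fun ω => by
        rw [← dist_eq_norm]
        calc dist (f (BM M ω + DM M)) (f (BM M ω + Dlim))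
            ≤ (L:ℝ) * dist (BM M ω + DM M) (BM M ω + Dlim) := hLip.dist_le_mul _ _
          _ = (L:ℝ) * ‖DM M - Dlim‖ := by rw [dist_add_left, dist_eq_norm]
          _ ≤ (L:ℝ) * δ := mul_le_mul_of_nonneg_left hM2.le hL0)
    simpa [measure_univ] using hb
  -- combine
  have tri : dist (∫ ω, f (A N ω) ∂μ) (∫ ω, f (Blim ω + Dlim) ∂ν₀)
      ≤ dist (∫ ω, f (A N ω) ∂μ) (∫ ω, f (B N M ω + DM M) ∂μ)
        + (dist (∫ ω, f (B N M ω + DM M) ∂μ) (∫ ω, f (BM M ω + DM M) ∂(ν M))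
          + dist (∫ ω, f (BM M ω + DM M) ∂(ν M)) (∫ ω, f (BM M ω + Dlim) ∂(ν M))
          + dist (∫ ω, f (BM M ω + Dlim) ∂(ν M)) (∫ ω, f (Blim ω + Dlim) ∂ν₀)) :=
    (dist_triangle _ _ _).trans (by gcongr; exact dist_triangle4 _ _ _ _)
  have hLδ8 : dist (∫ ω, f (BM M ω + DM M) ∂(ν M)) (∫ ω, f (BM M ω + Dlim) ∂(ν M)) ≤ ε/8 :=
    hT3.trans hLδ
  calc dist (∫ ω, f (A N ω) ∂μ) (∫ ω, f (Blim ω + Dlim) ∂ν₀)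
      ≤ _ := tri
    _ < ε := by linarith [hT1', hBN, hLδ8, hM3]


theorem step2
    {E : Type*} [NormedAddCommGroup E] [NormedSpace ℝ E] [CompleteSpace E]
    [TopologicalSpace.SeparableSpace E] [MeasurableSpace E] [BorelSpace E]
    {Ω : Type*} [MeasurableSpace Ω] (μ : Measure Ω) [IsProbabilityMeasure μ]
    {Ω₀ : Type*} [MeasurableSpace Ω₀] (ν₀ : Measure Ω₀) [IsProbabilityMeasure ν₀]
    (A : ℕ → Ω → E) (Blim : Ω₀ → E) (Dlim : E)
    (hAmeas : ∀ N, AEStronglyMeasurable (A N) μ)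
    (hBlimmeas : AEStronglyMeasurable Blim ν₀)
    (hkey : ∀ (f : E → ℝ) (L : ℝ≥0) (K : ℝ), LipschitzWith L f → (∀ x, |f x| ≤ K) →
      Tendsto (fun N => ∫ ω, f (A N ω) ∂μ) atTop (nhds (∫ ω, f (Blim ω + Dlim) ∂ν₀))) :
    ∀ f : BoundedContinuousFunction E ℝ,
      Tendsto (fun N => ∫ ω, f (A N ω) ∂μ) atTop (nhds (∫ ω, f (Blim ω + Dlim) ∂ν₀)) := by
  set W : Ω₀ → E := fun ω => Blim ω + Dlim with hWdef
  have hW : AEStronglyMeasurable W ν₀ := hBlimmeas.add aestronglyMeasurable_const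
  set P : ℕ → ProbabilityMeasure E := fun N =>
    ⟨μ.map (A N), Measure.isProbabilityMeasure_map (hAmeas N).aemeasurable⟩ with hPdef
  set Q : ProbabilityMeasure E := ⟨ν₀.map W, Measure.isProbabilityMeasure_map hW.aemeasurable⟩ with hQdef
  have hPA : ∀ N, (P N : Measure E) = μ.map (A N) := fun N => rfl
  have hQW : (Q : Measure E) = ν₀.map W := rfl
  have main : Tendsto P atTop (nhds Q) := by
    apply MeasureTheory.tendsto_of_forall_isOpen_le_liminf
    intro G G_open
    have hE : (Q : Measure E) G ≤ atTop.liminf (fun N => (P N : Measure E) G) := by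
      rcases Set.eq_empty_or_nonempty Gᶜ with hGc | hGc
      · have hGu : G = Set.univ := Set.compl_empty_iff.mp hGc
        subst hGu
        simp only [measure_univ]
        rw [liminf_const]
      · set g : ℕ → E → ℝ := fun n x => min 1 ((n:ℝ) * infDist x Gᶜ) with hgdef
        have hgLip : ∀ n : ℕ, LipschitzWith (‖(n:ℝ)‖₊ * 1) (g n) := by
          intro n
          have h1 : LipschitzWith (‖(n:ℝ)‖₊ * 1) (fun x : E => (n:ℝ) * infDist x Gᶜ) := by
            have := (lipschitzWith_smul (β := ℝ) (n:ℝ)).comp (lipschitz_infDist_pt (Gᶜ : Set E))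
            simpa [smul_eq_mul, Function.comp_def] using this
          exact h1.const_min 1
        have hgnn : ∀ n x, 0 ≤ g n x := by
          intro n x
          exact le_min zero_le_one (mul_nonneg (Nat.cast_nonneg n) infDist_nonneg)
        have hgb : ∀ n x, |g n x| ≤ 1 := by
          intro n x
          rw [abs_of_nonneg (hgnn n x)]
          exact min_le_left _ _
        have hgcont : ∀ n, Continuous (g n) := fun n => (hgLip n).continuous
        have hconv : ∀ n, Tendsto (fun N => ∫ ω, g n (A N ω) ∂μ) atTop
            (nhds (∫ ω, g n (W ω) ∂ν₀)) := fun n => hkey (g n) _ 1 (hgLip n) (hgb n)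
        -- per-N upper bound
        have hNle : ∀ n N, ENNReal.ofReal (∫ ω, g n (A N ω) ∂μ) ≤ (P N : Measure E) G := by
          intro n N
          rw [hPA, Measure.map_apply_of_aemeasurable (hAmeas N).aemeasurable G_open.measurableSet]
          rw [ofReal_integral_eq_lintegral_ofReal (integ_aux μ (hgcont n) (hgb n) (hAmeas N))
            (ae_of_all _ fun ω => hgnn n _)]
          calc ∫⁻ ω, ENNReal.ofReal (g n (A N ω)) ∂μ
              ≤ ∫⁻ ω, (A N ⁻¹' G).indicator (fun _ => (1:ℝ≥0∞)) ω ∂μ := by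
                apply lintegral_mono
                intro ω
                dsimp only
                by_cases hω : A N ω ∈ G
                · rw [Set.indicator_of_mem (show ω ∈ A N ⁻¹' G from hω)]
                  exact ENNReal.ofReal_le_one.mpr (min_le_left _ _)
                · rw [Set.indicator_of_notMem (show ω ∉ A N ⁻¹' G from hω)]
                  have : infDist (A N ω) Gᶜ = 0 := infDist_zero_of_mem hω
                  simp [hgdef, this]
            _ = μ (A N ⁻¹' G) := by
                rw [lintegral_indicator₀ ((hAmeas N).aemeasurable.nullMeasurable
                  G_open.measurableSet), setLIntegral_one]
        have hlim : ∀ n, ENNReal.ofReal (∫ ω, g n (W ω) ∂ν₀)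
            ≤ atTop.liminf (fun N => (P N : Measure E) G) := by
          intro n
          have t : Tendsto (fun N => ENNReal.ofReal (∫ ω, g n (A N ω) ∂μ)) atTop
              (nhds (ENNReal.ofReal (∫ ω, g n (W ω) ∂ν₀))) :=
            (ENNReal.continuous_ofReal.tendsto _).comp (hconv n)
          rw [← t.liminf_eq]
          exact liminf_le_liminf (Eventually.of_forall fun N => hNle n N)
        -- supremum identity
        have hmono : ∀ᵐ ω ∂ν₀, Monotone (fun n => ENNReal.ofReal (g n (W ω))) := by
          refine ae_of_all _ fun ω n m hnm => ?_
          apply ENNReal.ofReal_le_ofReal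
          apply min_le_min le_rfl
          have : (0:ℝ) ≤ infDist (W ω) Gᶜ := infDist_nonneg
          apply mul_le_mul_of_nonneg_right (by exact_mod_cast Nat.cast_le.mpr hnm) this
        have hmeas : ∀ n, AEMeasurable (fun ω => ENNReal.ofReal (g n (W ω))) ν₀ :=
          fun n => ENNReal.measurable_ofReal.comp_aemeasurable
            (((hgcont n).comp_aestronglyMeasurable hW).aemeasurable)
        have hptsup : ∀ ω, (⨆ n, ENNReal.ofReal (g n (W ω)))
            = (W ⁻¹' G).indicator (fun _ => (1:ℝ≥0∞)) ω := by
          intro ω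
          by_cases hω : W ω ∈ G
          · rw [Set.indicator_of_mem (show ω ∈ W ⁻¹' G from hω)]
            apply le_antisymm
            · exact iSup_le fun n => ENNReal.ofReal_le_one.mpr (min_le_left _ _)
            · have hdpos : 0 < infDist (W ω) Gᶜ := by
                rw [← (G_open.isClosed_compl.notMem_iff_infDist_pos hGc)]
                simpa using hω
              set n : ℕ := ⌈1 / infDist (W ω) Gᶜ⌉₊ with hndef
              have h1 : (1:ℝ) ≤ (n:ℝ) * infDist (W ω) Gᶜ := by
                rw [← div_le_iff₀ hdpos] at *
                · exact Nat.le_ceil _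
              have : g n (W ω) = 1 := min_eq_left h1
              calc (1:ℝ≥0∞) = ENNReal.ofReal (g n (W ω)) := by rw [this]; simp
                _ ≤ ⨆ m, ENNReal.ofReal (g m (W ω)) := le_iSup (fun m => ENNReal.ofReal (g m (W ω))) n
          · rw [Set.indicator_of_notMem (show ω ∉ W ⁻¹' G from hω)]
            have : infDist (W ω) Gᶜ = 0 := infDist_zero_of_mem hω
            simp [hgdef, this]
        calc (Q : Measure E) G = ν₀ (W ⁻¹' G) := by
              rw [hQW, Measure.map_apply_of_aemeasurable hW.aemeasurable G_open.measurableSet]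
          _ = ∫⁻ ω, (W ⁻¹' G).indicator (fun _ => (1:ℝ≥0∞)) ω ∂ν₀ := by
              rw [lintegral_indicator₀ (hW.aemeasurable.nullMeasurable G_open.measurableSet),
                setLIntegral_one]
          _ = ∫⁻ ω, ⨆ n, ENNReal.ofReal (g n (W ω)) ∂ν₀ :=
              lintegral_congr fun ω => (hptsup ω).symm
          _ = ⨆ n, ∫⁻ ω, ENNReal.ofReal (g n (W ω)) ∂ν₀ := lintegral_iSup' hmeas hmono
          _ = ⨆ n, ENNReal.ofReal (∫ ω, g n (W ω) ∂ν₀) := by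
              refine iSup_congr fun n => ?_
              rw [ofReal_integral_eq_lintegral_ofReal (integ_aux ν₀ (hgcont n) (hgb n) hW)
                (ae_of_all _ fun ω => hgnn n _)]
          _ ≤ atTop.liminf (fun N => (P N : Measure E) G) := iSup_le hlim
    -- convert ℝ≥0∞ inequality to ℝ≥0
    have aux : (↑(atTop.liminf (fun N => P N G)) : ℝ≥0∞)
        = atTop.liminf (fun N => ((P N G : ℝ≥0) : ℝ≥0∞)) := by
      refine Monotone.map_liminf_of_continuousAt (F := atTop) ENNReal.coe_mono (fun N => P N G)
        ?_ ?_ ?_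
      · exact ENNReal.continuous_coe.continuousAt
      · exact IsBoundedUnder.isCoboundedUnder_ge ⟨1, by
          simp only [eventually_map, eventually_atTop]
          exact ⟨0, fun N _ => ProbabilityMeasure.apply_le_one _ _⟩⟩
      · exact ⟨0, by simp⟩
    rw [← ENNReal.coe_le_coe, aux]
    calc (↑(Q G) : ℝ≥0∞) = (Q : Measure E) G := Q.ennreal_coeFn_eq_coeFn_toMeasure G
      _ ≤ atTop.liminf (fun N => (P N : Measure E) G) := hE
      _ = atTop.liminf (fun N => ((P N G : ℝ≥0) : ℝ≥0∞)) := by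
          refine liminf_congr (Eventually.of_forall fun N => ?_)
          exact ((P N).ennreal_coeFn_eq_coeFn_toMeasure G).symm
  intro f
  have hf := ProbabilityMeasure.tendsto_iff_forall_integral_tendsto.mp main f
  have e1 : ∀ N, ∫ x, f x ∂(P N : Measure E) = ∫ ω, f (A N ω) ∂μ := fun N => by
    rw [hPA, integral_map (hAmeas N).aemeasurable f.continuous.aestronglyMeasurable]
  have e2 : ∫ x, f x ∂(Q : Measure E) = ∫ ω, f (Blim ω + Dlim) ∂ν₀ := by
    rw [hQW, integral_map hW.aemeasurable f.continuous.aestronglyMeasurable]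
  rw [← e2]
  exact hf.congr e1

end StepLemmas





/-- Proposition `abstract_convergence_statement`.
With the decomposition `𝓐_N = 𝓡_N^M + 𝓑_N^M + 𝓒_N^M + 𝓓_N^M` of E-valued random variables:
(R1) `r^M := limsup_N E[‖𝓡_N^M‖²]` finite; (B1) `𝓑_N^M → 𝓑^M` in law; (C1) `E[‖𝓒_N^M‖²] → 0`;
(D1) `𝓓_N^M → 𝓓^M` (deterministic) in probability; (R2) `r^M → 0`; (B2) `𝓑^M → 𝓑` in law;
(D2) `𝓓^M → 𝓓`.  Then `𝓐_N → 𝓑 + 𝓓` in law. -/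
theorem stmt4
    {E : Type*} [NormedAddCommGroup E] [NormedSpace ℝ E] [CompleteSpace E]
    [TopologicalSpace.SeparableSpace E] [MeasurableSpace E] [BorelSpace E]
    {Ω : Type*} [MeasurableSpace Ω] (μ : Measure Ω) [IsProbabilityMeasure μ]
    {Ω' : ℕ → Type*} [∀ M, MeasurableSpace (Ω' M)]
    (ν : ∀ M, Measure (Ω' M)) [∀ M, IsProbabilityMeasure (ν M)]
    {Ω₀ : Type*} [MeasurableSpace Ω₀] (ν₀ : Measure Ω₀) [IsProbabilityMeasure ν₀]
    (A : ℕ → Ω → E) (R B C D : ℕ → ℕ → Ω → E)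
    (BM : ∀ M : ℕ, Ω' M → E) (Blim : Ω₀ → E) (DM : ℕ → E) (Dlim : E)
    (hAmeas : ∀ N, AEStronglyMeasurable (A N) μ)
    (hRmeas : ∀ N M, AEStronglyMeasurable (R N M) μ)
    (hBmeas : ∀ N M, AEStronglyMeasurable (B N M) μ)
    (hCmeas : ∀ N M, AEStronglyMeasurable (C N M) μ)
    (hDmeas : ∀ N M, AEStronglyMeasurable (D N M) μ)
    (hBMmeas : ∀ M, AEStronglyMeasurable (BM M) (ν M))
    (hBlimmeas : AEStronglyMeasurable Blim ν₀)
    (hdecomp : ∀ N M ω, A N ω = R N M ω + B N M ω + C N M ω + D N M ω)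
    (r : ℕ → ℝ≥0∞)
    (hr : ∀ M, r M = Filter.limsup (fun N => ∫⁻ ω, (‖R N M ω‖₊ : ℝ≥0∞) ^ 2 ∂μ) atTop)
    (hR1 : ∀ M, r M ≠ ⊤)
    (hB1 : ∀ M : ℕ, ∀ f : BoundedContinuousFunction E ℝ,
      Tendsto (fun N => ∫ ω, f (B N M ω) ∂μ) atTop (nhds (∫ ω, f (BM M ω) ∂(ν M))))
    (hC1 : ∀ M : ℕ, Tendsto (fun N => ∫⁻ ω, (‖C N M ω‖₊ : ℝ≥0∞) ^ 2 ∂μ) atTop (nhds 0))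
    (hD1 : ∀ M : ℕ, TendstoInMeasure μ (fun N => D N M) atTop (fun _ => DM M))
    (hR2 : Tendsto r atTop (nhds 0))
    (hB2 : ∀ f : BoundedContinuousFunction E ℝ,
      Tendsto (fun M => ∫ ω, f (BM M ω) ∂(ν M)) atTop (nhds (∫ ω, f (Blim ω) ∂ν₀)))
    (hD2 : Tendsto DM atTop (nhds Dlim)) :
    ∀ f : BoundedContinuousFunction E ℝ,
      Tendsto (fun N => ∫ ω, f (A N ω) ∂μ) atTop (nhds (∫ ω, f (Blim ω + Dlim) ∂ν₀)) := by
  refine step2 μ ν₀ A Blim Dlim hAmeas hBlimmeas ?_ 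
  intro f L K hLip hK
  exact step1 μ ν ν₀ A R B C D BM Blim DM Dlim hAmeas hRmeas hBmeas hCmeas hDmeas hBMmeas
    hBlimmeas hdecomp r hr hR1 hB1 hC1 hD1 hR2 hB2 hD2 f L K hLip hK
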